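/- If f, g, h : E → F satisfy ‖(1/|K|)·∑_{k∈K} f(x + k·y) − g(x) − h(y)‖_β ≤ φ(x,y) for all x, y ∈ E, and φ̂(x) := (1/|K|)·∑_{k∈K} f(k·x), then ‖(1/|K|)·∑_{k'∈K} φ̂(x + k'·y) − φ̂(x) − φ̂(y) + g(0) + h(0)‖_β ≤ ψ(x,y), where ψ(x,y) = (|K|/|K|^β)·φ(0,y) + (1/|K|^β)·∑_{k∈K}[φ(k·x, y) + φ(k·x, 0)]. -/

import Mathlib

theorem stmt_3
    {E : Type*} [AddCommGroup E] [Module ℝ E]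
    {F : Type*} [AddCommGroup F] [Module ℝ F]
    {β : ℝ} (hβ0 : 0 < β) (hβ1 : β ≤ 1)
    (Nb : F → ℝ)
    (hNnn : ∀ z : F, 0 ≤ Nb z)
    (hN0 : ∀ z : F, Nb z = 0 ↔ z = 0)
    (hNs : ∀ (r : ℝ) (z : F), Nb (r • z) = |r| ^ β * Nb z)
    (hNt : ∀ z w : F, Nb (z + w) ≤ Nb z + Nb w)
    {K : Type*} [CommGroup K] [Fintype K] [DistribMulAction K E]
    (φ : E → E → ℝ) (hφ : ∀ x y, 0 ≤ φ x y)
    (f g h : E → F)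
    (hfgh : ∀ x y : E,
      Nb ((Fintype.card K : ℝ)⁻¹ • (∑ k : K, f (x + k • y)) - g x - h y) ≤ φ x y)
    (φhat : E → F)
    (hφhat : ∀ x : E, φhat x = (Fintype.card K : ℝ)⁻¹ • (∑ k : K, f (k • x)))
    (ψ : E → E → ℝ)
    (hψ : ∀ x y : E, ψ x y =
      (Fintype.card K : ℝ) / (Fintype.card K : ℝ) ^ β * φ 0 y
        + ((Fintype.card K : ℝ) ^ β)⁻¹ * ∑ k : K, (φ (k • x) y + φ (k • x) 0)) :
    ∀ x y : E,
      Nb ((Fintype.card K : ℝ)⁻¹ • (∑ k' : K, φhat (x + k' • y)) - φhat x - φhat y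
          + g 0 + h 0) ≤ ψ x y := by
  intro x y
  classical
  set n : ℝ := (Fintype.card K : ℝ) with hn
  have hnpos : (0:ℝ) < n := by
    rw [hn]
    exact_mod_cast Fintype.card_pos
  have hn1 : (1:ℝ) ≤ n := by
    rw [hn]
    exact_mod_cast Fintype.card_pos
  have hNzero : Nb 0 = 0 := (hN0 0).mpr rfl
  have hNsum : ∀ (v : K → F), Nb (∑ k : K, v k) ≤ ∑ k : K, Nb (v k) := fun v =>
    Finset.le_sum_of_subadditive Nb hNzero.le hNt _ _
  have hNneg : ∀ z : F, Nb (-z) = Nb z := by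
    intro z
    have := hNs (-1) z
    simpa using this
  set A : E → E → F := fun a b => n⁻¹ • (∑ k : K, f (a + k • b)) - g a - h b with hA
  have hAbound : ∀ a b, Nb (A a b) ≤ φ a b := fun a b => hfgh a b
  have hcard_smul : ∀ v : F, n⁻¹ • ((Fintype.card K) • v) = v := by
    intro v
    rw [← Nat.cast_smul_eq_nsmul ℝ, ← hn, inv_smul_smul₀ (ne_of_gt hnpos)]
  -- E1
  have t1 : ∀ k' : K, φhat (x + k' • y)
      = n⁻¹ • ∑ k : K, f (k • x + (k * k') • y) := by
    intro k'
    rw [hφhat]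
    congr 1
    refine Finset.sum_congr rfl fun k _ => ?_
    rw [smul_add, smul_smul]
  have t2 : ∀ k : K, ∑ k' : K, f (k • x + (k * k') • y)
      = ∑ k' : K, f (k • x + k' • y) := fun k =>
    Fintype.sum_equiv (Equiv.mulLeft k) _ _ (fun k' => rfl)
  have t3 : ∀ k : K, n⁻¹ • ∑ k' : K, f (k • x + k' • y)
      = A (k • x) y + g (k • x) + h y := by
    intro k
    simp only [hA]
    abel
  have E1 : n⁻¹ • (∑ k' : K, φhat (x + k' • y))
      = n⁻¹ • (∑ k : K, A (k • x) y) + n⁻¹ • (∑ k : K, g (k • x)) + h y := by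
    calc n⁻¹ • (∑ k' : K, φhat (x + k' • y))
        = n⁻¹ • ∑ k' : K, n⁻¹ • ∑ k : K, f (k • x + (k * k') • y) := by
          rw [Finset.sum_congr rfl fun k' _ => t1 k']
      _ = n⁻¹ • ∑ k' : K, n⁻¹ • ∑ k : K, f (k • x + k' • y) := by
          rw [← Finset.smul_sum, ← Finset.smul_sum, Finset.sum_comm]
          rw [Finset.sum_congr rfl fun k _ => t2 k, Finset.sum_comm]
      _ = n⁻¹ • ∑ k : K, n⁻¹ • ∑ k' : K, f (k • x + k' • y) := by
          rw [← Finset.smul_sum, ← Finset.smul_sum, Finset.sum_comm]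
      _ = n⁻¹ • ∑ k : K, (A (k • x) y + g (k • x) + h y) := by
          rw [Finset.sum_congr rfl fun k _ => t3 k]
      _ = n⁻¹ • (∑ k : K, A (k • x) y) + n⁻¹ • (∑ k : K, g (k • x)) + h y := by
          rw [Finset.sum_add_distrib, Finset.sum_add_distrib, Finset.sum_const,
            Finset.card_univ, smul_add, smul_add, hcard_smul]
  -- E2
  have e3 : ∀ a : E, A a 0 = f a - g a - h 0 := by
    intro a
    rw [hA]
    simp only [smul_zero, add_zero, Finset.sum_const, Finset.card_univ]
    rw [hcard_smul]
  have E2 : φhat x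
      = n⁻¹ • (∑ k : K, A (k • x) 0) + n⁻¹ • (∑ k : K, g (k • x)) + h 0 := by
    have hs : ∑ k : K, A (k • x) 0
        = ∑ k : K, f (k • x) - ∑ k : K, g (k • x) - (Fintype.card K) • h 0 := by
      rw [Finset.sum_congr rfl fun k _ => e3 (k • x)]
      rw [Finset.sum_sub_distrib, Finset.sum_sub_distrib, Finset.sum_const,
        Finset.card_univ]
    rw [hs, smul_sub, smul_sub, hcard_smul, hφhat]
    abel
  -- E3
  have E3 : φhat y = A 0 y + g 0 + h y := by
    rw [hA]
    simp only [zero_add]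
    rw [← hφhat]
    abel
  have key : n⁻¹ • (∑ k' : K, φhat (x + k' • y)) - φhat x - φhat y + g 0 + h 0
      = n⁻¹ • (∑ k : K, A (k • x) y) - n⁻¹ • (∑ k : K, A (k • x) 0) - A 0 y := by
    rw [E1, E2, E3]
    abel
  rw [key, hψ]
  have habs : |n⁻¹| ^ β = (n ^ β)⁻¹ := by
    rw [abs_of_pos (inv_pos.mpr hnpos), ← Real.inv_rpow hnpos.le]
  have hrpos : (0:ℝ) < (n ^ β)⁻¹ := by positivity
  have hX : Nb (n⁻¹ • ∑ k : K, A (k • x) y) ≤ (n ^ β)⁻¹ * ∑ k : K, φ (k • x) y := by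
    rw [hNs, habs]
    exact mul_le_mul_of_nonneg_left
      ((hNsum _).trans (Finset.sum_le_sum fun k _ => hAbound _ _)) hrpos.le
  have hY : Nb (n⁻¹ • ∑ k : K, A (k • x) 0) ≤ (n ^ β)⁻¹ * ∑ k : K, φ (k • x) 0 := by
    rw [hNs, habs]
    exact mul_le_mul_of_nonneg_left
      ((hNsum _).trans (Finset.sum_le_sum fun k _ => hAbound _ _)) hrpos.le
  have hZ : Nb (A 0 y) ≤ φ 0 y := hAbound 0 y
  have tri : ∀ X Y Z : F, Nb (X - Y - Z) ≤ Nb X + Nb Y + Nb Z := by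
    intro X Y Z
    have h1 := hNt (X - Y) (-Z)
    rw [hNneg, ← sub_eq_add_neg] at h1
    have h2 := hNt X (-Y)
    rw [hNneg, ← sub_eq_add_neg] at h2
    linarith
  have hmono : φ 0 y ≤ n / n ^ β * φ 0 y := by
    have hb : n ^ β ≤ n := by
      calc n ^ β ≤ n ^ (1:ℝ) := Real.rpow_le_rpow_of_exponent_le hn1 hβ1
        _ = n := Real.rpow_one n
    have h1 : (1:ℝ) ≤ n / n ^ β := (one_le_div (by positivity)).mpr hb
    nlinarith [hφ 0 y]
  rw [Finset.sum_add_distrib, mul_add]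
  linarith [tri (n⁻¹ • (∑ k : K, A (k • x) y)) (n⁻¹ • (∑ k : K, A (k • x) 0)) (A 0 y), hX, hY, hZ, hmono]
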